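/- Let X be a periodic commutative semigroup with a unique idempotent e. If the maximal subgroup H_e of X is bounded and for every infinite subset A ⊆ X the set AA = {xy : x,y ∈ A} is not a singleton, then X is T1S-closed. -/

import Mathlib

/-- `spow x n` denotes the power `x^(n+1)` in a semigroup (so exponents `n ≥ 1` are
the values `spow x (n-1)`). -/
def spow {S : Type*} [Semigroup S] (x : S) : ℕ → S
  | 0 => x
  | n + 1 => spow x n * x

/-- The `H`-class of `a` in a semigroup `S`:
`H_a = {x ∈ S | xS¹ = aS¹ ∧ S¹x = S¹a}`, computed in `S¹ = WithOne S`. -/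
def HClass {S : Type*} [Semigroup S] (a : S) : Set S :=
  {x | {y : WithOne S | ∃ s : WithOne S, y = (x : WithOne S) * s} =
         {y : WithOne S | ∃ s : WithOne S, y = (a : WithOne S) * s} ∧
       {y : WithOne S | ∃ s : WithOne S, y = s * (x : WithOne S)} =
         {y : WithOne S | ∃ s : WithOne S, y = s * (a : WithOne S)}}

/-- The center `Z(S)` of a semigroup. -/
def centerSet (S : Type*) [Semigroup S] : Set S := {z : S | ∀ x : S, z * x = x * z}

/-- The Clifford part `H(S)`: the union of all `H`-classes of idempotents
(equivalently, of all maximal subgroups). -/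
def CliffordPart (S : Type*) [Semigroup S] : Set S :=
  {x : S | ∃ e : S, IsIdempotentElem e ∧ x ∈ HClass e}

/-- A semigroup is chain-finite if it contains no infinite chain, where a chain
is a set `C` with `x * y ∈ {x, y}` for all `x, y ∈ C`. -/
def ChainFinite (S : Type*) [Semigroup S] : Prop :=
  ∀ C : Set S, (∀ x ∈ C, ∀ y ∈ C, x * y = x ∨ x * y = y) → C.Finite

/-- A semigroup is periodic if every element has an idempotent power `x^n`, `n ≥ 1`. -/
def IsPeriodicSemigroup (S : Type*) [Semigroup S] : Prop :=
  ∀ x : S, ∃ n : ℕ, IsIdempotentElem (spow x n)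

/-- The maximal subgroup `H_e` of an idempotent `e` is bounded: some power `n ≥ 1`
of every element equals `e`. -/
def BoundedHClass {S : Type*} [Semigroup S] (e : S) : Prop :=
  ∃ n : ℕ, ∀ x ∈ HClass e, spow x n = e

/-- A semigroup `X` is `T₁S`-closed if for every topological semigroup `Y`
satisfying the `T₁` separation axiom and every injective homomorphism `h : X → Y`
with discrete image, the image of `h` is closed in `Y`. -/
def IsT1SClosed (X : Type*) [Semigroup X] : Prop :=
  ∀ (Y : Type*) [Semigroup Y] [TopologicalSpace Y] [ContinuousMul Y] [T1Space Y],
    ∀ h : X →ₙ* Y, Function.Injective h → DiscreteTopology (Set.range h) →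
      IsClosed (Set.range h)

/-- A semigroup `X` is `TzS`-closed if for every Hausdorff zero-dimensional
topological semigroup `Y` (i.e. the clopen sets form a base of the topology) and
every injective homomorphism `h : X → Y` with discrete image, the image of `h`
is closed in `Y`. -/
def IsTzSClosed (X : Type*) [Semigroup X] : Prop :=
  ∀ (Y : Type*) [Semigroup Y] [TopologicalSpace Y] [ContinuousMul Y] [T2Space Y],
    TopologicalSpace.IsTopologicalBasis {s : Set Y | IsClopen s} →
    ∀ h : X →ₙ* Y, Function.Injective h → DiscreteTopology (Set.range h) →
      IsClosed (Set.range h)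

-- auxiliary development
namespace S10

set_option linter.unusedSectionVars false

theorem spow_succ {S : Type*} [Semigroup S] (x : S) (n : ℕ) :
    spow x (n+1) = spow x n * x := rfl

theorem spow_succ' {S : Type*} [Semigroup S] (x : S) (n : ℕ) :
    spow x (n+1) = x * spow x n := by
  induction n with
  | zero => rfl
  | succ n ih =>
    rw [spow_succ, ih, mul_assoc, ← spow_succ, ih]

theorem spow_add {S : Type*} [Semigroup S] (x : S) (a b : ℕ) :
    spow x (a + b + 1) = spow x a * spow x b := by
  induction b with
  | zero => rfl
  | succ b ih =>
    have : a + (b+1) + 1 = (a + b + 1) + 1 := by omega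
    rw [this, spow_succ, ih, spow_succ, mul_assoc]

theorem map_spow {S T : Type*} [Semigroup S] [Semigroup T] (h : S →ₙ* T) (x : S) (n : ℕ) :
    h (spow x n) = spow (h x) n := by
  induction n with
  | zero => rfl
  | succ n ih => rw [spow_succ, map_mul, ih, spow_succ]

theorem spow_continuous {Y : Type*} [Semigroup Y] [TopologicalSpace Y] [ContinuousMul Y]
    (n : ℕ) : Continuous fun z : Y => spow z n := by
  induction n with
  | zero => exact continuous_id
  | succ n ih => exact ih.mul continuous_id

theorem mul_spow {S : Type*} [CommSemigroup S] (x y : S) (n : ℕ) :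
    spow (x * y) n = spow x n * spow y n := by
  induction n with
  | zero => rfl
  | succ n ih =>
    rw [spow_succ, ih, spow_succ, spow_succ]
    simp only [mul_assoc, mul_comm, mul_left_comm]

theorem spow_idem {S : Type*} [Semigroup S] {e : S} (he : IsIdempotentElem e) (n : ℕ) :
    spow e n = e := by
  induction n with
  | zero => rfl
  | succ n ih => rw [spow_succ, ih, he]

theorem spow_spow {S : Type*} [Semigroup S] (x : S) (a b : ℕ) :
    spow (spow x a) b = spow x (a*b + a + b) := by
  induction b with
  | zero =>
    show spow x a = spow x (a*0+a+0)
    congr 1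
    omega
  | succ b ih =>
    rw [spow_succ, ih, show a*(b+1)+a+(b+1) = (a*b+a+b) + a + 1 by ring, spow_add]

theorem spow_absorb {S : Type*} [CommSemigroup S] {x e : S} (hx : x * e = e) (n : ℕ) :
    spow x n * e = e := by
  induction n with
  | zero => exact hx
  | succ n ih => rw [spow_succ, mul_assoc, hx, ih]

theorem spow_stable {S : Type*} [CommSemigroup S] {x e : S} (hx : x * e = e)
    {m : ℕ} (hxm : spow x m = e) : ∀ j, m ≤ j → spow x j = e := by
  intro j hj
  obtain ⟨t, rfl⟩ := Nat.exists_eq_add_of_le hj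
  induction t with
  | zero => exact hxm
  | succ t ih =>
    have : m + (t+1) = (m + t) + 1 := by omega
    rw [this, spow_succ, ih (by omega), mul_comm]
    exact hx

section Topo

variable {X : Type*} [CommSemigroup X] {Y : Type*} [Semigroup Y] [TopologicalSpace Y]
  [ContinuousMul Y] [T1Space Y] (h : X →ₙ* Y)

theorem isolated_nbhd (hdisc : DiscreteTopology (Set.range h)) (d : Y)
    (hd : d ∈ Set.range h) : ∃ V : Set Y, IsOpen V ∧ V ∩ Set.range h = {d} := by
  have hopen : IsOpen ({⟨d, hd⟩} : Set (Set.range h)) := isOpen_discrete _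
  rw [isOpen_induced_iff] at hopen
  obtain ⟨V, hV, hVpre⟩ := hopen
  refine ⟨V, hV, ?_⟩
  ext z
  constructor
  · rintro ⟨hzV, hzr⟩
    have : (⟨z, hzr⟩ : Set.range h) ∈ (Subtype.val ⁻¹' V : Set (Set.range h)) := hzV
    rw [hVpre] at this
    simpa using congrArg Subtype.val this
  · rintro rfl
    have : (⟨z, hd⟩ : Set.range h) ∈ ({⟨z, hd⟩} : Set (Set.range h)) := rfl
    rw [← hVpre] at this
    exact ⟨this, hd⟩

theorem trace_infinite (w : Y) (hw1 : w ∈ closure (Set.range h)) (hw2 : w ∉ Set.range h)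
    {U : Set Y} (hU : IsOpen U) (hwU : w ∈ U) : {x : X | h x ∈ U}.Infinite := by
  by_contra hfin
  rw [Set.not_infinite] at hfin
  have hFim : (h '' {x : X | h x ∈ U}).Finite := hfin.image _
  have hcl : IsClosed (h '' {x : X | h x ∈ U}) := hFim.isClosed
  have hw3 : w ∉ h '' {x : X | h x ∈ U} := by
    rintro ⟨x, -, rfl⟩; exact hw2 ⟨x, rfl⟩
  have hU' : IsOpen (U \ h '' {x : X | h x ∈ U}) := hU.sdiff hcl
  have hwU' : w ∈ U \ h '' {x : X | h x ∈ U} := ⟨hwU, hw3⟩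
  obtain ⟨z, hz1, x, rfl⟩ := mem_closure_iff.mp hw1 _ hU' hwU'
  exact hz1.2 ⟨x, hz1.1, rfl⟩

theorem spow_mem_closure (w : Y) (hw1 : w ∈ closure (Set.range h)) (k : ℕ) :
    spow w k ∈ closure (Set.range h) := by
  rw [mem_closure_iff]
  intro W hW hmem
  have hcont : Continuous fun z : Y => spow z k := spow_continuous k
  have hpre : IsOpen ((fun z : Y => spow z k) ⁻¹' W) := hcont.isOpen_preimage W hW
  obtain ⟨z, hz1, x, rfl⟩ := mem_closure_iff.mp hw1 _ hpre hmem
  exact ⟨spow (h x) k, hz1, ⟨spow x k, map_spow h x k⟩⟩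

theorem no_power_in_range (hinj : Function.Injective h)
    (hdisc : DiscreteTopology (Set.range h))
    (hAA : ∀ A : Set X, A.Infinite → ∀ z : X, Set.image2 (· * ·) A A ≠ {z})
    (w : Y) (hw1 : w ∈ closure (Set.range h)) (hw2 : w ∉ Set.range h) :
    ∀ k, spow w k ∉ Set.range h := by
  intro k
  induction k using Nat.strong_induction_on with
  | _ k IH =>
    match k with
    | 0 => exact hw2
    | (k' + 1) =>
      intro hmem
      obtain ⟨d, hd⟩ := hmem
      obtain ⟨V, hV, hVr⟩ := isolated_nbhd h hdisc (h d) ⟨d, rfl⟩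
      have hdV : h d ∈ V := by
        have : h d ∈ ({h d} : Set Y) := rfl
        rw [← hVr] at this; exact this.1
      have hF2cont : Continuous fun p : Y × Y => p.1 * spow p.2 k' :=
        continuous_fst.mul ((spow_continuous k').comp continuous_snd)
      have hpre : IsOpen ((fun p : Y × Y => p.1 * spow p.2 k') ⁻¹' V) :=
        hF2cont.isOpen_preimage V hV
      have hwwpre : (w, w) ∈ (fun p : Y × Y => p.1 * spow p.2 k') ⁻¹' V := by
        show w * spow w k' ∈ V
        rw [← spow_succ', ← hd]
        exact hdV
      obtain ⟨U₁, U₂, hU₁, hU₂, hwU₁, hwU₂, hsub⟩ :=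
        isOpen_prod_iff.mp hpre w w hwwpre
      set U := U₁ ∩ U₂ with hUdef
      have hUopen : IsOpen U := hU₁.inter hU₂
      have hwU : w ∈ U := ⟨hwU₁, hwU₂⟩
      set T := {x : X | h x ∈ U} with hTdef
      have hTinf : T.Infinite := trace_infinite h w hw1 hw2 hUopen hwU
      have hconst : ∀ x ∈ T, ∀ x' ∈ T, x * spow x' k' = d := by
        intro x hx x' hx'
        have hmemV : h x * spow (h x') k' ∈ V :=
          hsub (Set.mk_mem_prod hx.1 hx'.2)
        rw [← map_spow, ← map_mul] at hmemV
        have : h (x * spow x' k') ∈ V ∩ Set.range h := ⟨hmemV, ⟨_, rfl⟩⟩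
        rw [hVr] at this
        exact hinj this
      match k' with
      | 0 =>
        have himg : Set.image2 (· * ·) T T = {d} := by
          ext z
          constructor
          · rintro ⟨x, hx, x', hx', rfl⟩
            exact hconst x hx x' hx'
          · rintro rfl
            obtain ⟨x₀, hx₀⟩ := hTinf.nonempty
            exact ⟨x₀, hx₀, x₀, hx₀, hconst x₀ hx₀ x₀ hx₀⟩
        exact hAA T hTinf d himg
      | (j + 1) =>
        obtain ⟨x₀, hx₀⟩ := hTinf.nonempty
        set c := spow x₀ j * d with hcdef
        have hclaim : ∀ x ∈ T, ∀ x' ∈ T, spow x (j+1) * spow x' (j+1) = c := by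
          intro x hx x' hx'
          have e1 : spow x (j+1) * spow x' (j+1) = spow x j * d := by
            rw [spow_succ, mul_assoc, hconst x hx x' hx']
          have e2 : spow x (j+1) * spow x₀ (j+1) = spow x j * d := by
            rw [spow_succ, mul_assoc, hconst x hx x₀ hx₀]
          have e3 : spow x₀ (j+1) * spow x (j+1) = c := by
            rw [spow_succ, mul_assoc, hconst x₀ hx₀ x hx, hcdef]
          rw [e1, ← e2, mul_comm, e3]
        set S := (fun x => spow x (j+1)) '' T with hSdef
        by_cases hS : S.Infinite
        · have himg : Set.image2 (· * ·) S S = {c} := by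
            ext z
            constructor
            · rintro ⟨z1, ⟨x, hx, rfl⟩, z2, ⟨x', hx', rfl⟩, rfl⟩
              exact hclaim x hx x' hx'
            · rintro rfl
              exact ⟨spow x₀ (j+1), ⟨x₀, hx₀, rfl⟩, spow x₀ (j+1), ⟨x₀, hx₀, rfl⟩,
                hclaim x₀ hx₀ x₀ hx₀⟩
          exact hAA S hS c himg
        · rw [Set.not_infinite] at hS
          have hfin : (h '' S).Finite := hS.image _
          have hclmem : spow w (j+1) ∈ closure (h '' S) := by
            rw [mem_closure_iff]
            intro W hW hmemW
            have hpreW : IsOpen ((fun z : Y => spow z (j+1)) ⁻¹' W) :=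
              (spow_continuous (j+1)).isOpen_preimage W hW
            have hinf2 : {x : X | h x ∈ U ∩ (fun z : Y => spow z (j+1)) ⁻¹' W}.Infinite :=
              trace_infinite h w hw1 hw2 (hUopen.inter hpreW) ⟨hwU, hmemW⟩
            obtain ⟨x, hx⟩ := hinf2.nonempty
            refine ⟨h (spow x (j+1)), ⟨?_, ⟨spow x (j+1), ⟨x, hx.1, rfl⟩, rfl⟩⟩⟩
            rw [map_spow]
            exact hx.2
          have hsmem : spow w (j+1) ∈ h '' S := hfin.isClosed.closure_subset hclmem
          have : spow w (j+1) ∈ Set.range h := by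
            obtain ⟨z, -, hz⟩ := hsmem; exact ⟨z, hz⟩
          exact IH (j+1) (by omega) this

end Topo

section Main

variable {X : Type*} [CommSemigroup X] {Y : Type*} [Semigroup Y] [TopologicalSpace Y]
  [ContinuousMul Y] [T1Space Y] (h : X →ₙ* Y)

theorem false_of_limit (hinj : Function.Injective h)
    (hdisc : DiscreteTopology (Set.range h))
    (hAA : ∀ A : Set X, A.Infinite → ∀ z : X, Set.image2 (· * ·) A A ≠ {z})
    (e : X) (he : IsIdempotentElem e)
    (hm : ∀ x : X, ∃ m, spow x m = e)
    (n : ℕ) (hI1 : ∀ x : X, spow x n * e = e)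
    (y : Y) (hy1 : y ∈ closure (Set.range h)) (hy2 : y ∉ Set.range h) : False := by
  classical
  set w := spow y n with hwdef
  have hwcl : w ∈ closure (Set.range h) := spow_mem_closure h y hy1 n
  have hwnr : w ∉ Set.range h := no_power_in_range h hinj hdisc hAA y hy1 hy2 n
  have hML : ∀ k, spow w k ∉ Set.range h :=
    no_power_in_range h hinj hdisc hAA w hwcl hwnr
  -- reduction : w * h e = h e
  have hred : w * h e = h e := by
    have hsub : Set.range h ⊆ (fun t : Y => spow t n * h e) ⁻¹' {h e} := by
      rintro z ⟨x, rfl⟩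
      show spow (h x) n * h e ∈ ({h e} : Set Y)
      rw [Set.mem_singleton_iff, ← map_spow, ← map_mul]
      exact congrArg h (hI1 x)
    have hcls : IsClosed ((fun t : Y => spow t n * h e) ⁻¹' {h e}) :=
      (isClosed_singleton).preimage ((spow_continuous n).mul continuous_const)
    exact closure_minimal hsub hcls hy1
  -- diamond
  have hdia : ∀ x : X, ∃ x' : X, h x' = w * h x := by
    intro x
    by_cases hq : w * h x ∈ Set.range h
    · obtain ⟨x', hx'⟩ := hq; exact ⟨x', hx'⟩
    · exfalso
      have hqcl : w * h x ∈ closure (Set.range h) := by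
        rw [mem_closure_iff]
        intro W hW hmemW
        have hcont : Continuous fun t : Y => t * h x := continuous_id.mul continuous_const
        have hpre := hcont.isOpen_preimage W hW
        obtain ⟨z, hz1, u, rfl⟩ := mem_closure_iff.mp hwcl _ hpre hmemW
        exact ⟨h u * h x, hz1, ⟨u * x, map_mul h u x⟩⟩
      obtain ⟨m, hxm⟩ := hm x
      set L := m*n + m + n with hLdef
      have hsub : Set.range h ⊆ (fun t : Y => spow (t * h x) L) ⁻¹' {h e} := by
        rintro z ⟨u, rfl⟩
        show spow (h u * h x) L ∈ ({h e} : Set Y)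
        rw [Set.mem_singleton_iff, ← map_mul, ← map_spow]
        apply congrArg h
        rw [hLdef, ← spow_spow, mul_spow, hxm, mul_spow, spow_idem he]
        exact hI1 _
      have hcls : IsClosed ((fun t : Y => spow (t * h x) L) ⁻¹' {h e}) :=
        (isClosed_singleton).preimage
          ((spow_continuous L).comp (continuous_id.mul continuous_const))
      have hmem : spow (w * h x) L ∈ ({h e} : Set Y) := closure_minimal hsub hcls hwcl
      have : spow (w * h x) L ∈ Set.range h := by
        rw [Set.mem_singleton_iff.mp hmem]; exact ⟨e, rfl⟩
      exact no_power_in_range h hinj hdisc hAA (w * h x) hqcl hq L this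
  choose φ hφ using hdia
  -- φ identities
  have hφmul : ∀ x z : X, φ (x * z) = φ x * z := by
    intro x z
    apply hinj
    rw [map_mul, hφ, hφ, map_mul, mul_assoc]
  have hφe : φ e = e := hinj (by rw [hφ, hred])
  have hitmul : ∀ (k : ℕ) (x z : X), φ^[k] (x*z) = φ^[k] x * z := by
    intro k
    induction k with
    | zero => intro x z; simp
    | succ k ih =>
      intro x z
      rw [Function.iterate_succ_apply', Function.iterate_succ_apply', ih, hφmul]
  have hite : ∀ k, φ^[k] e = e := by
    intro k
    induction k with
    | zero => simp
    | succ k ih => rw [Function.iterate_succ_apply', ih, hφe]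
  have hpair : ∀ (a b : ℕ) (x x' : X), φ^[a] x * φ^[b] x' = φ^[a+b] (x * x') := by
    intro a b x x'
    rw [mul_comm, ← hitmul b x' (φ^[a] x), mul_comm x' (φ^[a] x), ← hitmul a x x',
      ← Function.iterate_add_apply, Nat.add_comm b a]
  have hpersist : ∀ (x : X) (k s : ℕ), φ^[k] x = e → φ^[k+s] x = e := by
    intro x k s hk
    rw [Nat.add_comm k s, Function.iterate_add_apply, hk, hite]
  have hφK : ∀ (x : X), x * e = e → ∀ k, φ^[k] x * e = e := by
    intro x hx k
    induction k with
    | zero => exact hx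
    | succ k ih => rw [Function.iterate_succ_apply', ← hφmul, ih, hφe]
  have hP1 : ∀ (k : ℕ) (x : X), h (φ^[k+1] x) = spow w k * h x := by
    intro k
    induction k with
    | zero => intro x; rw [show φ^[1] x = φ x from rfl, hφ]; rfl
    | succ k ih =>
      intro x
      rw [Function.iterate_succ_apply, ih (φ x), hφ, ← mul_assoc, ← spow_succ]
  -- full-trace constancy
  have hFT : ∀ x : X, ∃ U : Set Y, IsOpen U ∧ w ∈ U ∧ ∀ u : X, h u ∈ U → u * x = φ x := by
    intro x
    obtain ⟨V, hV, hVr⟩ := isolated_nbhd h hdisc (h (φ x)) ⟨φ x, rfl⟩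
    have hφxV : h (φ x) ∈ V := by
      have : h (φ x) ∈ ({h (φ x)} : Set Y) := rfl
      rw [← hVr] at this; exact this.1
    refine ⟨(fun t : Y => t * h x) ⁻¹' V,
      (continuous_id.mul continuous_const).isOpen_preimage V hV, ?_, ?_⟩
    · show w * h x ∈ V
      rw [← hφ]; exact hφxV
    · intro u hu
      have : h (u * x) ∈ V ∩ Set.range h := by
        constructor
        · rw [map_mul]; exact hu
        · exact ⟨_, rfl⟩
      rw [hVr] at this
      exact hinj this
  obtain ⟨U₀, hU₀o, hwU₀, hU₀⟩ := hFT e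
  have hU₀e : ∀ u : X, h u ∈ U₀ → u * e = e := by
    intro u hu; rw [hU₀ u hu, hφe]
  -- cycles die at e
  have hCY : ∀ c : X, c * e = e → ∀ P, 1 ≤ P → φ^[P] c = c → c = e := by
    intro c hc P hP hcyc
    choose Uf hUfo hUfw hUf using fun j : ℕ => hFT (φ^[j] c)
    set Uc := U₀ ∩ ⋂ j ∈ Finset.range P, Uf j with hUcdef
    have hUco : IsOpen Uc := hU₀o.inter (isOpen_biInter_finset fun j _ => hUfo j)
    have hwUc : w ∈ Uc := by
      refine ⟨hwU₀, ?_⟩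
      rw [Set.mem_iInter₂]
      intro j _
      exact hUfw j
    obtain ⟨u, hu⟩ := (trace_infinite h w hwcl hwnr hUco hwUc).nonempty
    have hue : u * e = e := hU₀e u hu.1
    have hustep : ∀ j < P, u * φ^[j] c = φ^[j+1] c := by
      intro j hj
      have huj : h u ∈ Uf j := by
        have := hu.2
        rw [Set.mem_iInter₂] at this
        exact this j (Finset.mem_range.mpr hj)
      rw [hUf j u huj]
      exact (Function.iterate_succ_apply' φ j c).symm
    have hpow : ∀ j, j + 1 ≤ P → spow u j * c = φ^[j+1] c := by
      intro j
      induction j with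
      | zero =>
        intro hj
        have := hustep 0 (by omega)
        exact this
      | succ j ih =>
        intro hj
        rw [spow_succ', mul_assoc, ih (by omega), hustep (j+1) (by omega)]
    have hPc : spow u (P-1) * c = c := by
      have := hpow (P-1) (by omega)
      rw [show P-1+1 = P by omega] at this
      rw [this, hcyc]
    have hQ : ∀ Q : ℕ, spow u ((Q+1)*P - 1) * c = c := by
      intro Q
      induction Q with
      | zero => simpa using hPc
      | succ Q ih =>
        have hidx : (Q+1+1)*P - 1 = ((Q+1)*P - 1) + (P-1) + 1 := by
          have h1 : 1 ≤ (Q+1)*P := by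
            calc 1 ≤ P := hP
            _ ≤ (Q+1)*P := Nat.le_mul_of_pos_left P (by omega)
          have h2 : (Q+1+1)*P = (Q+1)*P + P := by ring
          omega
        rw [hidx, spow_add, mul_assoc, hPc, ih]
    obtain ⟨mu, hmu⟩ := hm u
    have hbig : spow u ((mu+1)*P - 1) = e := by
      apply spow_stable hue hmu
      have h1 : mu + 1 ≤ (mu+1)*P := Nat.le_mul_of_pos_right (mu+1) (by omega)
      omega
    have := hQ mu
    rw [hbig] at this
    rw [← this, mul_comm]
    exact hc
  -- every K-element dies
  have hDies : ∀ x : X, x * e = e → ∃ k, φ^[k] x = e := by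
    intro x hx
    by_contra hnd
    push_neg at hnd
    have hPex : ∃ i : ℕ, ∃ k : ℕ, φ^[k] (spow x (2^i - 1)) = e := by
      obtain ⟨mx, hmx⟩ := hm x
      refine ⟨mx + 1, 0, ?_⟩
      show spow x (2^(mx+1) - 1) = e
      apply spow_stable hx hmx
      have := Nat.lt_two_pow_self (n := mx)
      have h2 : 2^mx < 2^(mx+1) := by
        have : (2:ℕ)^(mx+1) = 2^mx * 2 := pow_succ 2 mx
        omega
      omega
    set I := Nat.find hPex with hIdef
    have hIpos : 1 ≤ I := by
      by_contra hI0
      have hI0' : I = 0 := by omega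
      have hspec := Nat.find_spec hPex
      rw [← hIdef, hI0'] at hspec
      obtain ⟨k, hk⟩ := hspec
      exact hnd k (by simpa [spow] using hk)
    set z := spow x (2^(I-1) - 1) with hz
    have hzK : z * e = e := spow_absorb hx _
    have hznd : ∀ k, φ^[k] z ≠ e := by
      have hmin := Nat.find_min hPex (show I - 1 < I by omega)
      push_neg at hmin
      exact hmin
    have hzz : z * z = spow x (2^I - 1) := by
      rw [hz, ← spow_add]
      congr 1
      have h2 : (2:ℕ)^I = 2^(I-1) * 2 := by
        conv_lhs => rw [show I = (I-1)+1 by omega]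
        exact pow_succ 2 (I-1)
      have h3 : 1 ≤ (2:ℕ)^(I-1) := Nat.one_le_two_pow
      omega
    obtain ⟨k₂, hk₂⟩ := Nat.find_spec hPex
    rw [← hzz] at hk₂
    set f : ℕ → X := fun k => φ^[k + k₂] z with hf
    have hkey : ∀ a b : ℕ, a < b → f a = f b → False := by
      intro a b hab heq
      have hcyc : φ^[b-a] (φ^[a+k₂] z) = φ^[a+k₂] z := by
        rw [← Function.iterate_add_apply, show b-a+(a+k₂) = b+k₂ by omega]
        exact heq.symm
      have hKc : φ^[a+k₂] z * e = e := hφK z hzK _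
      have := hCY _ hKc (b-a) (by omega) hcyc
      exact hznd (a+k₂) this
    have hfinj : Function.Injective f := by
      intro a b hab
      rcases Nat.lt_trichotomy a b with hlt | heqq | hgt
      · exact absurd hab (fun hh => hkey a b hlt hh)
      · exact heqq
      · exact absurd hab.symm (fun hh => hkey b a hgt hh)
    have hWinf : (Set.range f).Infinite := Set.infinite_range_of_injective hfinj
    have hprod : ∀ a b : ℕ, f a * f b = e := by
      intro a b
      rw [hf]
      show φ^[a+k₂] z * φ^[b+k₂] z = e
      rw [hpair]
      have := hpersist (z*z) k₂ (a + b + k₂) hk₂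
      rwa [show k₂ + (a+b+k₂) = a+k₂+(b+k₂) by omega] at this
    have himg : Set.image2 (· * ·) (Set.range f) (Set.range f) = {e} := by
      ext v
      constructor
      · rintro ⟨v1, ⟨a, rfl⟩, v2, ⟨b, rfl⟩, rfl⟩
        exact hprod a b
      · rintro rfl
        exact ⟨f 0, ⟨0, rfl⟩, f 0, ⟨0, rfl⟩, hprod 0 0⟩
    exact hAA _ hWinf e himg
  -- unbounded death times on the trace of U₀
  have hTAU : ∀ k : ℕ, ∃ u : X, h u ∈ U₀ ∧ φ^[k+1] u ≠ e := by
    intro k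
    by_contra hno
    push_neg at hno
    have hmemr : spow w (k+1) ∈ Set.range h := by
      have hcl2 : spow w (k+1) ∈ closure ({h e} : Set Y) := by
        rw [mem_closure_iff]
        intro W hW hmemW
        have hcont : Continuous fun t : Y => spow w k * t := continuous_const.mul continuous_id
        have hpre := hcont.isOpen_preimage W hW
        have hwpre : w ∈ (fun t : Y => spow w k * t) ⁻¹' W := by
          show spow w k * w ∈ W
          rw [← spow_succ]
          exact hmemW
        have hinf := trace_infinite h w hwcl hwnr (hU₀o.inter hpre) ⟨hwU₀, hwpre⟩
        obtain ⟨u, hu⟩ := hinf.nonempty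
        refine ⟨spow w k * h u, hu.2, ?_⟩
        show spow w k * h u ∈ ({h e} : Set Y)
        rw [Set.mem_singleton_iff, ← hP1 k u, hno u hu.1]
      rw [closure_singleton, Set.mem_singleton_iff] at hcl2
      rw [hcl2]
      exact ⟨e, rfl⟩
    exact hML (k+1) hmemr
  -- final construction
  have hexU : ∀ i : ℕ, ∃ u : X, h u ∈ U₀ ∧ φ^[2*i+2] u ≠ e := by
    intro i
    obtain ⟨u, hu1, hu2⟩ := hTAU (2*i+1)
    exact ⟨u, hu1, by rwa [show 2*i+1+1 = 2*i+2 by omega] at hu2⟩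
  choose u huU₀ hune using hexU
  have huK : ∀ i, u i * e = e := fun i => hU₀e _ (huU₀ i)
  have hdies : ∀ i, ∃ k, φ^[k] (u i) = e := fun i => hDies _ (huK i)
  set τ : ℕ → ℕ := fun i => Nat.find (hdies i) with hτ
  have hτspec : ∀ i, φ^[τ i] (u i) = e := fun i => Nat.find_spec (hdies i)
  have hτmin : ∀ i, ∀ j < τ i, φ^[j] (u i) ≠ e := fun i j hj => Nat.find_min (hdies i) hj
  have hτbig : ∀ i, 2*i + 3 ≤ τ i := by
    intro i
    by_contra hlt
    push_neg at hlt
    apply hune i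
    have := hpersist (u i) (τ i) (2*i+2 - τ i) (hτspec i)
    rwa [show τ i + (2*i+2 - τ i) = 2*i+2 by omega] at this
  have hkey2 : ∀ i, ∀ a < τ i, ∀ b < τ i, a < b → φ^[a] (u i) ≠ φ^[b] (u i) := by
    intro i a ha b _ hab heq
    have hcyc : φ^[b-a] (φ^[a] (u i)) = φ^[a] (u i) := by
      rw [← Function.iterate_add_apply, show b-a+a = b by omega]
      exact heq.symm
    have hKc : φ^[a] (u i) * e = e := hφK _ (huK i) a
    have := hCY _ hKc (b-a) (by omega) hcyc
    exact hτmin i a ha this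
  have hinj2 : ∀ i, ∀ a < τ i, ∀ b < τ i, φ^[a] (u i) = φ^[b] (u i) → a = b := by
    intro i a ha b hb hab
    rcases Nat.lt_trichotomy a b with hlt | heqq | hgt
    · exact absurd hab (hkey2 i a ha b hb hlt)
    · exact heqq
    · exact absurd hab.symm (hkey2 i b hb a ha hgt)
  set Sf : ℕ → Finset X :=
    fun i => (Finset.Ico ((τ i + 1)/2) (τ i)).image (fun j => φ^[j] (u i)) with hSf
  have hcard : ∀ i, i + 1 ≤ (Sf i).card := by
    intro i
    rw [hSf]
    rw [Finset.card_image_of_injOn]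
    · rw [Nat.card_Ico]
      have := hτbig i
      omega
    · intro a ha b hb hab
      simp only [Finset.coe_Ico, Set.mem_Ico] at ha hb
      exact hinj2 i a ha.2 b hb.2 hab
  set 𝒮 : Set X := ⋃ i, (Sf i : Set X) with h𝒮
  have hprodS : ∀ s ∈ 𝒮, ∀ t ∈ 𝒮, s * t = e := by
    intro s hs t ht
    rw [h𝒮, Set.mem_iUnion] at hs ht
    obtain ⟨i, hsi⟩ := hs
    obtain ⟨j, htj⟩ := ht
    rw [hSf] at hsi htj
    simp only [Finset.coe_image, Set.mem_image, Finset.mem_coe, Finset.mem_Ico] at hsi htj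
    obtain ⟨a, ha, rfl⟩ := hsi
    obtain ⟨b, hb, rfl⟩ := htj
    rw [hpair]
    rcases le_total (τ i) (τ j) with hij | hij
    · have hdead : φ^[τ i] (u i * u j) = e := by
        rw [hitmul, hτspec i, mul_comm]
        exact huK j
      have := hpersist _ (τ i) (a+b - τ i) hdead
      rwa [show τ i + (a+b-τ i) = a+b by omega] at this
    · have hdead : φ^[τ j] (u i * u j) = e := by
        rw [mul_comm (u i) (u j), hitmul, hτspec j, mul_comm]
        exact huK i
      have := hpersist _ (τ j) (a+b - τ j) hdead
      rwa [show τ j + (a+b-τ j) = a+b by omega] at this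
  have hSinf : 𝒮.Infinite := by
    by_contra hfin
    rw [Set.not_infinite] at hfin
    have hsub : ∀ i, Sf i ⊆ hfin.toFinset := by
      intro i x hx
      rw [Set.Finite.mem_toFinset]
      exact Set.mem_iUnion.mpr ⟨i, hx⟩
    have h1 := Finset.card_le_card (hsub hfin.toFinset.card)
    have h2 := hcard hfin.toFinset.card
    omega
  have himgS : Set.image2 (· * ·) 𝒮 𝒮 = {e} := by
    ext v
    constructor
    · rintro ⟨s, hs, t, ht, rfl⟩
      exact hprodS s hs t ht
    · rintro rfl
      have h0 : (Sf 0).Nonempty := Finset.card_pos.mp (by have := hcard 0; omega)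
      obtain ⟨s, hs⟩ := h0
      have hs' : s ∈ 𝒮 := Set.mem_iUnion.mpr ⟨0, hs⟩
      exact ⟨s, hs', s, hs', hprodS s hs' s hs'⟩
  exact hAA 𝒮 hSinf e himgS

end Main


/-- `x * e` lies in the `H`-class of the idempotent `e`, in a periodic
commutative semigroup in which some power of `x*e` equals `e`. -/
theorem mul_idem_mem_HClass {S : Type*} [CommSemigroup S] {e : S}
    (he : IsIdempotentElem e) (x : S) (hm : ∃ m, spow (x * e) m = e) :
    x * e ∈ HClass e := by
  obtain ⟨m, hme⟩ := hm
  have hinv : ∃ w : S, (x * e) * w = e := by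
    cases m with
    | zero => exact ⟨e, by rw [show spow (x*e) 0 = x*e from rfl] at hme; rw [mul_assoc, he.eq, hme]⟩
    | succ m => exact ⟨spow (x*e) m, by rw [← spow_succ', hme]⟩
  obtain ⟨w, hw⟩ := hinv
  constructor
  · ext y
    simp only [Set.mem_setOf_eq]
    constructor
    · rintro ⟨s, rfl⟩
      refine ⟨(x*e : S) * s, ?_⟩
      have h1 : (x*e : S) = e * (x*e) := by
        rw [mul_comm e (x*e), mul_assoc, he.eq]
      rw [← mul_assoc, ← WithOne.coe_mul, ← h1]
    · rintro ⟨s, rfl⟩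
      refine ⟨(w : WithOne S) * s, ?_⟩
      rw [← mul_assoc, ← WithOne.coe_mul, hw]
  · ext y
    simp only [Set.mem_setOf_eq]
    constructor
    · rintro ⟨s, rfl⟩
      refine ⟨s * (x*e : S), ?_⟩
      have h1 : (x*e : S) = (x*e) * e := by rw [mul_assoc, he.eq]
      rw [mul_assoc, ← WithOne.coe_mul, ← h1]
    · rintro ⟨s, rfl⟩
      refine ⟨s * (w : WithOne S), ?_⟩
      have h2 : e = w * (x * e) := by rw [mul_comm]; exact hw.symm
      rw [mul_assoc, ← WithOne.coe_mul, ← h2]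


end S10

theorem statement10 {X : Type*} [CommSemigroup X]
    (hper : IsPeriodicSemigroup X)
    (e : X) (he : IsIdempotentElem e)
    (huniq : ∀ f : X, IsIdempotentElem f → f = e)
    (hb : BoundedHClass e)
    (hAA : ∀ A : Set X, A.Infinite → ∀ z : X, Set.image2 (· * ·) A A ≠ {z}) :
    IsT1SClosed X := by
  have hm : ∀ x : X, ∃ m, spow x m = e := by
    intro x
    obtain ⟨n₁, h1⟩ := hper x
    exact ⟨n₁, huniq _ h1⟩
  obtain ⟨n, hbn⟩ := hb
  have hI1 : ∀ x : X, spow x n * e = e := by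
    intro x
    have hmem := S10.mul_idem_mem_HClass he x (hm (x*e))
    have hx := hbn (x*e) hmem
    rwa [S10.mul_spow, S10.spow_idem he] at hx
  intro Y _ _ _ _ h hinj hdisc
  apply isClosed_of_closure_subset
  intro y hy
  by_contra hy2
  exact S10.false_of_limit h hinj hdisc hAA e he hm n hI1 y hy hy2
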